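/- For every t ∈ ℚ with t ≠ 0 and t ≠ -1, setting h = 16t²/(t+1), the pair (h, 16t(t+2)/(t+1)) lies on the curve y² = h(h+64); consequently j = (h+16)³/h satisfies j - 1728 is a square in ℚ, and moreover j = 256(t²+t+1)³/(t²(t+1)²). -/
import Mathlib


/-- For `t ∈ ℚ`, `t ≠ 0, -1`, with `h = 16t²/(t+1)`, the point `(h, 16t(t+2)/(t+1))` lies
on `y² = h(h+64)`; hence `j₂(h) - 1728` is a square in `ℚ` and
`j₂(h) = 256(t²+t+1)³/(t²(t+1)²)`. -/
theorem param_N_eq_two (t : ℚ) (ht : t ≠ 0) (ht' : t ≠ -1) :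
    let h : ℚ := 16 * t ^ 2 / (t + 1)
    (16 * t * (t + 2) / (t + 1)) ^ 2 = h * (h + 64) ∧
      IsSquare ((h + 16) ^ 3 / h - 1728) ∧
      (h + 16) ^ 3 / h = 256 * (t ^ 2 + t + 1) ^ 3 / (t ^ 2 * (t + 1) ^ 2) := by
  have h1 : t + 1 ≠ 0 := fun h => ht' (by linarith [h])
  intro h
  refine ⟨?_, ⟨8 * (2 * t + 1) * (t - 1) * (t + 2) / (t * (t + 1)), ?_⟩, ?_⟩
  · show _ = (16 * t ^ 2 / (t + 1)) * (16 * t ^ 2 / (t + 1) + 64)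
    field_simp
    ring
  · show (16 * t ^ 2 / (t + 1) + 16) ^ 3 / (16 * t ^ 2 / (t + 1)) - 1728 = _
    field_simp
    ring
  · show (16 * t ^ 2 / (t + 1) + 16) ^ 3 / (16 * t ^ 2 / (t + 1)) = _
    field_simp
    ring
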